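/- Let n ≥ 2 and let f : F_2^n → F_2 be defined by f(x) = 1 if the Hamming weight of x is 0 or 1, and f(x) = 0 otherwise. Then for every (n−1)-dimensional flat A of F_2^n, the restriction of f to A has algebraic degree at least n−2. -/

import Mathlib

open scoped Classical

noncomputable section

/-- Boolean functions in `n` variables. -/
abbrev BF (n : ℕ) := (Fin n → ZMod 2) → ZMod 2

/-- `A` is a `k`-dimensional flat (coset of a `k`-dimensional linear subspace) of `𝔽₂ⁿ`. -/
def IsFlat {n : ℕ} (A : Set (Fin n → ZMod 2)) (k : ℕ) : Prop :=
  ∃ (W : Submodule (ZMod 2) (Fin n → ZMod 2)) (v : Fin n → ZMod 2),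
    Module.finrank (ZMod 2) W = k ∧ A = (fun w => v + w) '' (W : Set (Fin n → ZMod 2))

/-- The sum (parity) of `f` over a subset of `𝔽₂ⁿ`. -/
def flatSum {n : ℕ} (f : BF n) (A : Set (Fin n → ZMod 2)) : ZMod 2 :=
  ∑ x ∈ A.toFinite.toFinset, f x

/-- The restriction of `f` to `A` has algebraic degree at most `d`:
by the standard parity criterion, this holds iff the sum of `f` over every
`(d+1)`-dimensional flat contained in `A` vanishes. -/
def DegLE {n : ℕ} (f : BF n) (A : Set (Fin n → ZMod 2)) (d : ℕ) : Prop :=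
  ∀ B : Set (Fin n → ZMod 2), IsFlat B (d + 1) → B ⊆ A → flatSum f B = 0

/-- The algebraic degree of the restriction of `f` to `A`. -/
def degOn {n : ℕ} (f : BF n) (A : Set (Fin n → ZMod 2)) : ℕ :=
  sInf {d | DegLE f A d}

/-- `α(f, k)`: the minimal algebraic degree of `f` restricted to a `k`-dimensional flat. -/
def alphaDeg {n : ℕ} (f : BF n) (k : ℕ) : ℕ :=
  sInf {d | ∃ A, IsFlat A k ∧ degOn f A = d}

/-- `g(n, k) = max_f α(f, k)`. -/
def gdeg (n k : ℕ) : ℕ :=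
  sSup {m | ∃ f : BF n, alphaDeg f k = m}

/-- The nonlinearity of the restriction of `f` to `A`: the minimal Hamming distance,
on `A`, from `f` to an affine function. -/
def nlOn {n : ℕ} (f : BF n) (A : Set (Fin n → ZMod 2)) : ℕ :=
  sInf {m | ∃ (a : Fin n → ZMod 2) (c : ZMod 2),
    m = (A.toFinite.toFinset.filter (fun x => f x ≠ (∑ i, a i * x i) + c)).card}

lemma zmod2_ne_zero {a : ZMod 2} (h : a ≠ 0) : a = 1 := by revert h; revert a; decide

lemma sum_eq_card_support {n : ℕ} (u : Fin n → ZMod 2) :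
    ∑ i, u i = ((Finset.univ.filter fun i => u i ≠ 0).card : ZMod 2) := by
  rw [← Finset.sum_filter_ne_zero, Finset.card_eq_sum_ones, Nat.cast_sum]
  refine Finset.sum_congr rfl fun i hi => ?_
  rw [Finset.mem_filter] at hi
  simp [zmod2_ne_zero hi.2]

set_option maxHeartbeats 1000000 in
theorem stmt2 {n : ℕ} (hn : 2 ≤ n)
    (f : BF n)
    (hf : ∀ x, f x = if (Finset.univ.filter fun i => x i ≠ 0).card ≤ 1 then 1 else 0)
    (A : Set (Fin n → ZMod 2)) (hA : IsFlat A (n - 1)) :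
    n - 2 ≤ degOn f A := by
  obtain ⟨W, v, hWrank, hAeq⟩ := hA
  have hn' : Module.finrank (ZMod 2) (Fin n → ZMod 2) = n := by
    simp [Module.finrank_pi]
  -- a linear functional with kernel W
  have hquot : Module.finrank (ZMod 2) ((Fin n → ZMod 2) ⧸ W) = 1 := by
    have h := W.finrank_quotient_add_finrank
    have hWle : Module.finrank (ZMod 2) ↥W ≤ n := by
      have := Submodule.finrank_le W
      omega
    omega
  obtain ⟨e⟩ := FiniteDimensional.nonempty_linearEquiv_of_finrank_eq
    (hquot.trans (Module.finrank_self (ZMod 2)).symm)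
  set φ : (Fin n → ZMod 2) →ₗ[ZMod 2] ZMod 2 := e.toLinearMap ∘ₗ W.mkQ with hφ
  have hker : LinearMap.ker φ = W := by
    rw [hφ, LinearMap.ker_comp, LinearEquiv.ker, Submodule.comap_bot, Submodule.ker_mkQ]
  have hmemA : ∀ x, x ∈ A ↔ φ x = φ v := by
    intro x
    rw [hAeq]
    constructor
    · rintro ⟨w, hw, rfl⟩
      have : φ w = 0 := by rw [← LinearMap.mem_ker, hker]; exact hw
      simp [map_add, this]
    · intro h
      refine ⟨x - v, ?_, by simp⟩
      rw [← hker, SetLike.mem_coe, LinearMap.mem_ker, map_sub, h, sub_self]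
  -- choose a base point p and a functional ψ
  have key : ∃ (p : Fin n → ZMod 2) (ψ : (Fin n → ZMod 2) →ₗ[ZMod 2] ZMod 2),
      p ∈ A ∧ (Finset.univ.filter fun i => p i ≠ 0).card ≤ 1 ∧
      ∀ u : Fin n → ZMod 2, ψ u = 0 →
        (Finset.univ.filter fun i => (p + u) i ≠ 0).card ≤ 1 → u = 0 := by
    by_cases hc : φ v = 0
    · refine ⟨0, ∑ i, LinearMap.proj i, (hmemA 0).2 (by simp [hc]), by simp, ?_⟩
      intro u hψ hcard
      rw [zero_add] at hcard
      have hsum : ∑ i, u i = 0 := by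
        simpa [LinearMap.sum_apply] using hψ
      rw [sum_eq_card_support] at hsum
      have hcard0 : (Finset.univ.filter fun i => u i ≠ 0).card = 0 := by
        rcases Nat.le_one_iff_eq_zero_or_eq_one.mp hcard with h | h
        · exact h
        · rw [h] at hsum; exact absurd hsum (by decide)
      funext i
      show u i = 0
      by_contra hi
      have hmem : i ∈ Finset.univ.filter fun i => u i ≠ 0 := by
        simp [hi]
      rw [Finset.card_eq_zero] at hcard0
      simp [hcard0] at hmem
    · have hex : ∃ i0, φ (Pi.single i0 1) = φ v := by
        by_contra hno
        push_neg at hno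
        have hzero : ∀ i, φ (Pi.single i 1) = 0 := by
          intro i
          by_contra h
          exact hno i ((zmod2_ne_zero h).trans (zmod2_ne_zero hc).symm)
        apply hc
        have : v = ∑ i, v i • Pi.single i 1 := by
          funext j
          simp [Finset.sum_apply, Pi.single_apply]
        rw [this, map_sum]
        simp [map_smul, hzero]
      obtain ⟨i0, hi0⟩ := hex
      refine ⟨(Pi.single i0 1 : Fin n → ZMod 2), LinearMap.proj i0, (hmemA _).2 hi0, ?_, ?_⟩
      · calc (Finset.univ.filter fun i => (Pi.single i0 1 : Fin n → ZMod 2) i ≠ 0).card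
            ≤ ({i0} : Finset (Fin n)).card := by
              apply Finset.card_le_card
              intro i hi
              rw [Finset.mem_filter] at hi
              rcases eq_or_ne i i0 with h | h
              · simp [h]
              · exact absurd (Pi.single_eq_of_ne h 1) hi.2
          _ = 1 := Finset.card_singleton i0
      · intro u hψ hcard
        have hui0 : u i0 = 0 := hψ
        have hxi0 : ((Pi.single i0 1 : Fin n → ZMod 2) + u) i0 ≠ 0 := by
          rw [Pi.add_apply, Pi.single_eq_same, hui0]
          decide
        have hmem : i0 ∈ Finset.univ.filter fun i => ((Pi.single i0 1 : Fin n → ZMod 2) + u) i ≠ 0 := by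
          rw [Finset.mem_filter]
          exact ⟨Finset.mem_univ i0, hxi0⟩
        have hone := Finset.card_le_one.mp hcard
        funext i
        rcases eq_or_ne i i0 with rfl | h
        · exact hui0
        · have hi : i ∉ Finset.univ.filter fun j => ((Pi.single i0 1 : Fin n → ZMod 2) + u) j ≠ 0 := by
            intro hmem'
            exact h (hone i hmem' i0 hmem)
          rw [Finset.mem_filter] at hi
          push_neg at hi
          have := hi (Finset.mem_univ i)
          simpa [Pi.single_eq_of_ne h] using this
  obtain ⟨p, ψ, hpA, hpwt, hclaim⟩ := key
  -- lower bound the rank of W ⊓ ker ψ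
  set K := W ⊓ LinearMap.ker ψ with hK
  have hKrank : n - 2 ≤ Module.finrank (ZMod 2) K := by
    have h1 := Submodule.finrank_sup_add_finrank_inf_eq W (LinearMap.ker ψ)
    rw [← hK] at h1
    have h2 : Module.finrank (ZMod 2) ↥(W ⊔ LinearMap.ker ψ) ≤ n := by
      have := Submodule.finrank_le (W ⊔ LinearMap.ker ψ)
      rw [hn'] at this
      exact this
    have h3 := LinearMap.finrank_range_add_finrank_ker ψ
    have h4 : Module.finrank (ZMod 2) ↥(LinearMap.range ψ) ≤ 1 := by
      have := Submodule.finrank_le (LinearMap.range ψ)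
      rw [Module.finrank_self] at this
      exact this
    rw [hn'] at h3
    omega
  refine le_csInf ⟨n, fun B hB _ => ?_⟩ fun d hd => ?_
  · -- degree at most n always: no (n+1)-dimensional flat exists
    obtain ⟨W', v', hr, _⟩ := hB
    have h := Submodule.finrank_le W'
    rw [hn', hr] at h
    omega
  · -- main: DegLE f A d → n - 2 ≤ d
    by_contra hlt
    push_neg at hlt
    have hle : d + 1 ≤ Module.finrank (ZMod 2) K := by omega
    -- a (d+1)-dimensional subspace U ≤ K
    set r := Module.finrank (ZMod 2) K with hr
    let b : Module.Basis (Fin r) (ZMod 2) K := Module.finBasis (ZMod 2) K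
    let g : Fin (d + 1) → (Fin n → ZMod 2) := fun i => (b (Fin.castLE hle i) : Fin n → ZMod 2)
    have hgi : LinearIndependent (ZMod 2) g := by
      have h1 : LinearIndependent (ZMod 2) (b ∘ Fin.castLE hle) :=
        b.linearIndependent.comp _ (Fin.castLE_injective hle)
      exact h1.map' K.subtype (Submodule.ker_subtype K)
    set U := Submodule.span (ZMod 2) (Set.range g) with hU
    have hUK : U ≤ K := by
      rw [hU, Submodule.span_le]
      rintro _ ⟨i, rfl⟩
      exact (b (Fin.castLE hle i)).2
    have hUrank : Module.finrank (ZMod 2) U = d + 1 := by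
      rw [hU, finrank_span_eq_card hgi, Fintype.card_fin]
    set B : Set (Fin n → ZMod 2) := (fun w => p + w) '' (U : Set (Fin n → ZMod 2)) with hBdef
    have hBflat : IsFlat B (d + 1) := ⟨U, p, hUrank, rfl⟩
    have hφp : φ p = φ v := (hmemA p).1 hpA
    have hBA : B ⊆ A := by
      rintro _ ⟨u, hu, rfl⟩
      have huW : u ∈ W := (hUK hu).1
      have : φ u = 0 := by rw [← LinearMap.mem_ker, hker]; exact huW
      exact (hmemA _).2 (by simp only [map_add, this, add_zero, hφp])
    have hzero := hd B hBflat hBA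
    -- but the sum over B is 1
    have hpB : p ∈ B.toFinite.toFinset := by
      rw [Set.Finite.mem_toFinset]
      exact ⟨0, U.zero_mem, by simp⟩
    have hone : flatSum f B = 1 := by
      rw [flatSum, Finset.sum_eq_single_of_mem p hpB]
      · rw [hf, if_pos hpwt]
      · intro x hx hne
        rw [Set.Finite.mem_toFinset] at hx
        obtain ⟨u, hu, rfl⟩ := hx
        have huψ : ψ u = 0 := (hUK hu).2
        rw [hf, if_neg]
        intro hcard
        exact hne (by simp [hclaim u huψ hcard])
    rw [hzero] at hone
    exact absurd hone (by decide)
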